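/- Let G be a finite simple graph, M a matching in G, and L ≥ 0 an integer. Suppose that every M-augmenting path in G has more than 2L + 1 edges (equivalently, at least 2L + 3 edges). Then every matching M' of G satisfies (L + 1)·|M'| ≤ (L + 2)·|M|. -/

import Mathlib

namespace MatchRatio

variable {V : Type*}

open Classical in
/-- The matching partner of `v` in edge set `A`, if any. -/
noncomputable def partner (A : Finset (Sym2 V)) (v : V) : Option V :=
  if h : ∃ w, s(v, w) ∈ A then some h.choose else none

lemma partner_mem {A : Finset (Sym2 V)} {v w : V} (h : partner A v = some w) :
    s(v, w) ∈ A := by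
  unfold partner at h
  split at h
  · next hex => cases h; exact hex.choose_spec
  · exact absurd h (by simp)

lemma partner_eq_none_iff {A : Finset (Sym2 V)} {v : V} :
    partner A v = none ↔ ∀ w, s(v, w) ∉ A := by
  unfold partner
  split
  · next hex =>
    constructor
    · intro h; exact absurd h (by simp)
    · intro h; exact absurd hex.choose_spec (h _)
  · next hex => push_neg at hex; simp [hex]

/-- Uniqueness of the partner for a matching. -/
lemma matchUniq {A : Finset (Sym2 V)}
    (hA : ∀ e ∈ A, ∀ f ∈ A, e ≠ f → ∀ v : V, v ∈ e → v ∉ f)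
    {v w w' : V} (h : s(v, w) ∈ A) (h' : s(v, w') ∈ A) : w = w' := by
  by_cases he : (s(v, w) : Sym2 V) = s(v, w')
  · rcases Sym2.eq_iff.mp he with ⟨_, h2⟩ | ⟨h1, h2⟩
    · exact h2
    · exact h2.trans h1
  · exact absurd (Sym2.mem_mk_left v w') (hA _ h _ h' he v (Sym2.mem_mk_left v w))

lemma matchUniq' {A : Finset (Sym2 V)}
    (hA : ∀ e ∈ A, ∀ f ∈ A, e ≠ f → ∀ v : V, v ∈ e → v ∉ f)
    {e e' : Sym2 V} (he : e ∈ A) (he' : e' ∈ A) {v : V} (hv : v ∈ e) (hv' : v ∈ e') :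
    e = e' := by
  by_contra hne
  exact hA _ he _ he' hne v hv hv'

lemma partner_eq_some {A : Finset (Sym2 V)}
    (hA : ∀ e ∈ A, ∀ f ∈ A, e ≠ f → ∀ v : V, v ∈ e → v ∉ f)
    {v w : V} (h : s(v, w) ∈ A) : partner A v = some w := by
  unfold partner
  split
  · next hex => exact congrArg some (matchUniq hA hex.choose_spec h)
  · next hex => exact absurd ⟨w, h⟩ hex

/-- The alternating walk starting at `s`: step `k → k+1` uses an `A`-edge when `k` is
even and a `B`-edge when `k` is odd. -/
noncomputable def walk (A B : Finset (Sym2 V)) (s : V) : ℕ → Option V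
  | 0 => some s
  | (k+1) => (walk A B s k).bind (fun v => if k % 2 = 0 then partner A v else partner B v)

variable {A B : Finset (Sym2 V)} {s : V}

lemma walk_none_succ {k : ℕ} (h : walk A B s k = none) : walk A B s (k+1) = none := by
  simp [walk, h]

lemma walk_isSome_mono {i j : ℕ} (hij : i ≤ j) (h : (walk A B s j).isSome) :
    (walk A B s i).isSome := by
  by_contra hi
  rw [Option.not_isSome_iff_eq_none] at hi
  have key : ∀ m, walk A B s (i + m) = none := by
    intro m
    induction m with
    | zero => exact hi
    | succ m ih => exact walk_none_succ ih
  have := key (j - i)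
  rw [Nat.add_sub_cancel' hij] at this
  simp [this] at h

lemma walk_succ_eq {k : ℕ} {v : V} (h : walk A B s k = some v) :
    walk A B s (k+1) = if k % 2 = 0 then partner A v else partner B v := by
  simp [walk, h]

lemma walk_step {k : ℕ} {v w : V} (h : walk A B s k = some v)
    (h' : walk A B s (k+1) = some w) :
    s(v, w) ∈ (if k % 2 = 0 then A else B) := by
  rw [walk_succ_eq h] at h'
  by_cases hk : k % 2 = 0
  · rw [if_pos hk] at h' ⊢; exact partner_mem h'
  · rw [if_neg hk] at h' ⊢; exact partner_mem h'

section Inj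

variable (hA : ∀ e ∈ A, ∀ f ∈ A, e ≠ f → ∀ v : V, v ∈ e → v ∉ f)
  (hB : ∀ e ∈ B, ∀ f ∈ B, e ≠ f → ∀ v : V, v ∈ e → v ∉ f)
  (hndA : ∀ e ∈ A, ¬ e.IsDiag) (hndB : ∀ e ∈ B, ¬ e.IsDiag)
  (hs : partner B s = none)

include hA hB in
lemma walk_prev {k : ℕ} {v w : V} (h : walk A B s k = some v)
    (h' : walk A B s (k+1) = some w) :
    (if k % 2 = 0 then partner A w else partner B w) = some v := by
  have hst := walk_step h h'
  by_cases hk : k % 2 = 0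
  · rw [if_pos hk] at hst ⊢
    exact partner_eq_some hA (by rwa [Sym2.eq_swap] at hst)
  · rw [if_neg hk] at hst ⊢
    exact partner_eq_some hB (by rwa [Sym2.eq_swap] at hst)

include hA hB hndA hndB hs in
lemma walk_inj_aux : ∀ m i j (v : V), 2*(j-i)+i ≤ m → i < j →
    walk A B s i = some v → walk A B s j = some v → False := by
  intro m
  induction m using Nat.strong_induction_on with
  | _ m ih =>
    intro i j v hm hij hi hj
    rcases eq_or_lt_of_le (Nat.succ_le_of_lt hij) with hj1 | hj2
    · -- j = i + 1 : loop edge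
      have hst := walk_step hi (hj1 ▸ hj)
      by_cases hk : i % 2 = 0
      · rw [if_pos hk] at hst
        exact hndA _ hst (by simp [Sym2.isDiag_iff_proj_eq])
      · rw [if_neg hk] at hst
        exact hndB _ hst (by simp [Sym2.isDiag_iff_proj_eq])
    · -- j ≥ i + 2
      obtain ⟨j', rfl⟩ : ∃ j', j = j' + 1 := ⟨j - 1, by omega⟩
      have hj' : (walk A B s j').isSome := walk_isSome_mono (Nat.le_succ j') (by simp [hj])
      obtain ⟨u', hu'⟩ := Option.isSome_iff_exists.mp hj'
      have hprevj := walk_prev hA hB hu' hj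
      by_cases hpar : i % 2 = j' % 2
      · -- i and j have different parity: mixed case, go forward from i, back from j
        have hi1 : (walk A B s (i+1)).isSome :=
          walk_isSome_mono (j := j'+1) (by omega) (by simp [hj])
        obtain ⟨u, hu⟩ := Option.isSome_iff_exists.mp hi1
        have hfwd : (if i % 2 = 0 then partner A v else partner B v) = some u := by
          rw [walk_succ_eq hi] at hu; exact hu
        have huu' : u = u' := by
          rw [hpar] at hfwd
          rw [hfwd] at hprevj
          exact Option.some_injective V hprevj
        have hlt : i + 1 < j' := by omega
        refine ih (2*(j' - (i+1)) + (i+1)) ?_ (i+1) j' u (le_refl _) hlt hu (huu' ▸ hu')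
        omega
      · -- i and j have the same parity
        rcases Nat.eq_zero_or_pos i with rfl | hipos
        · -- i = 0: v = s, and the backward step at j is a B-step, but s is B-unsaturated
          have hvs : v = s := by
            have h0 : walk A B s 0 = some s := rfl
            rw [h0] at hi; exact (Option.some_injective V hi).symm
          have hj'odd : ¬ (j' % 2 = 0) := by omega
          rw [if_neg hj'odd, hvs, hs] at hprevj
          cases hprevj
        · -- i ≥ 1: step back on both sides
          obtain ⟨i', rfl⟩ : ∃ i', i = i' + 1 := ⟨i - 1, by omega⟩
          have hi' : (walk A B s i').isSome :=
            walk_isSome_mono (Nat.le_succ i') (by simp [hi])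
          obtain ⟨u, hu⟩ := Option.isSome_iff_exists.mp hi'
          have hprevi := walk_prev hA hB hu hi
          have hpar2 : i' % 2 = j' % 2 := by omega
          rw [hpar2] at hprevi
          have huu' : u = u' := by
            rw [hprevi] at hprevj
            exact Option.some_injective V hprevj
          refine ih (2*(j' - i') + i') ?_ i' j' u (le_refl _) (by omega) hu (huu' ▸ hu')
          omega

include hA hB hndA hndB hs in
lemma walk_inj {i j : ℕ} {v : V} (hi : walk A B s i = some v)
    (hj : walk A B s j = some v) : i = j := by
  rcases lt_trichotomy i j with h | h | h
  · exact absurd (walk_inj_aux hA hB hndA hndB hs _ i j v (le_refl _) h hi hj) not_false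
  · exact h
  · exact absurd (walk_inj_aux hA hB hndA hndB hs _ j i v (le_refl _) h hj hi) not_false

end Inj

lemma card_filter_even (n : ℕ) :
    ((Finset.range n).filter (fun i => i % 2 = 0)).card = (n+1)/2 := by
  induction n with
  | zero => simp
  | succ n ih =>
    rw [Finset.range_add_one, Finset.filter_insert]
    split
    · rw [Finset.card_insert_of_notMem (by simp)]
      omega
    · omega

lemma card_filter_odd (n : ℕ) :
    ((Finset.range n).filter (fun i => i % 2 = 1)).card = n/2 := by
  induction n with
  | zero => simp
  | succ n ih =>
    rw [Finset.range_add_one, Finset.filter_insert]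
    split
    · rw [Finset.card_insert_of_notMem (by simp)]
      omega
    · omega



/-- Number of vertices covered by a matching with non-diagonal edges. -/
lemma cov_card {V : Type*} [Fintype V] [DecidableEq V] (C : Finset (Sym2 V))
    (hnd : ∀ e ∈ C, ¬ e.IsDiag)
    (hdisj : ∀ e ∈ C, ∀ f ∈ C, e ≠ f → ∀ v : V, v ∈ e → v ∉ f) :
    (C.biUnion (fun e => Finset.univ.filter (· ∈ e))).card = 2 * C.card := by
  rw [Finset.card_biUnion]
  · have hcard2 : ∀ e ∈ C, (Finset.univ.filter (· ∈ e)).card = 2 := by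
      intro e
      induction e using Sym2.ind with
      | _ u v =>
        intro he
        have huv : u ≠ v := by
          intro h
          exact hnd _ he (by simp [h, Sym2.isDiag_iff_proj_eq])
        have hset : Finset.univ.filter (· ∈ (s(u,v) : Sym2 V)) = {u, v} := by
          ext x
          simp [Sym2.mem_iff]
        rw [hset, Finset.card_insert_of_notMem (by simp [huv]), Finset.card_singleton]
    rw [Finset.sum_congr rfl hcard2, Finset.sum_const, smul_eq_mul, mul_comm]
  · intro e he f hf hne
    simp only [Finset.disjoint_left, Finset.mem_filter]
    rintro v ⟨-, hv⟩ ⟨-, hv'⟩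
    exact hdisj e he f hf hne v hv hv'

lemma aux {V : Type*} [Fintype V] (L : ℕ) :
    ∀ (k : ℕ) (G : SimpleGraph V) (M M' : Finset (Sym2 V)),
      M'.card ≤ k →
      (∀ e ∈ M, e ∈ G.edgeSet) →
      (∀ e ∈ M, ∀ f ∈ M, e ≠ f → ∀ v : V, v ∈ e → v ∉ f) →
      (∀ (n : ℕ) (f : ℕ → V), n % 2 = 1 →
        (∀ i j, i ≤ n → j ≤ n → f i = f j → i = j) →
        (∀ i, i < n → G.Adj (f i) (f (i + 1))) →
        (∀ e ∈ M, f 0 ∉ e) → (∀ e ∈ M, f n ∉ e) →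
        (∀ i, i < n → (s(f i, f (i + 1)) ∈ M ↔ i % 2 = 1)) →
        2 * L + 1 < n) →
      (∀ e ∈ M', e ∈ G.edgeSet) →
      (∀ e ∈ M', ∀ f ∈ M', e ≠ f → ∀ v : V, v ∈ e → v ∉ f) →
      (L + 1) * M'.card ≤ (L + 2) * M.card := by
  intro k
  induction k with
  | zero =>
    intro G M M' hk _ _ _ _ _
    simp [Finset.card_eq_zero.mp (Nat.le_zero.mp hk)]
  | succ k ih =>
    intro G M M' hk hM_edges hM_disj haug hM'_edges hM'_disj
    classical
    set A := M' \ M with hA_def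
    set B := M \ M' with hB_def
    have hA : ∀ e ∈ A, ∀ f ∈ A, e ≠ f → ∀ v : V, v ∈ e → v ∉ f :=
      fun e he f hf => hM'_disj e (Finset.mem_sdiff.mp he).1 f (Finset.mem_sdiff.mp hf).1
    have hB : ∀ e ∈ B, ∀ f ∈ B, e ≠ f → ∀ v : V, v ∈ e → v ∉ f :=
      fun e he f hf => hM_disj e (Finset.mem_sdiff.mp he).1 f (Finset.mem_sdiff.mp hf).1
    have hndA : ∀ e ∈ A, ¬ e.IsDiag :=
      fun e he => G.not_isDiag_of_mem_edgeSet (hM'_edges e (Finset.mem_sdiff.mp he).1)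
    have hndB : ∀ e ∈ B, ¬ e.IsDiag :=
      fun e he => G.not_isDiag_of_mem_edgeSet (hM_edges e (Finset.mem_sdiff.mp he).1)
    by_cases hS : ∃ s : V, (∀ e ∈ M, s ∉ e) ∧ ∃ w, s(s, w) ∈ A
    · -- main case: there is a starting vertex for an alternating walk
      obtain ⟨s, hs_unsat, w0, hw0⟩ := hS
      have hsB : partner B s = none :=
        partner_eq_none_iff.mpr
          (fun w hw => hs_unsat _ (Finset.mem_sdiff.mp hw).1 (Sym2.mem_mk_left s w))
      -- the walk eventually dies
      have hex : ∃ m, walk A B s m = none := by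
        by_contra hno
        push_neg at hno
        have hinj : Function.Injective
            (fun i : Fin (Fintype.card V + 1) => ((walk A B s i).get
              (Option.ne_none_iff_isSome.mp (hno i)))) := by
          intro i j hij
          simp only at hij
          have hi := Option.some_get (Option.ne_none_iff_isSome.mp (hno i))
          have hj := Option.some_get (Option.ne_none_iff_isSome.mp (hno j))
          rw [hij] at hi
          exact Fin.ext (walk_inj hA hB hndA hndB hsB hi.symm hj.symm)
        have := Fintype.card_le_of_injective _ hinj
        simp [Fintype.card_fin] at this
      have hfind_pos : 0 < Nat.find hex := by
        rcases Nat.eq_zero_or_pos (Nat.find hex) with h0 | h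
        · have := Nat.find_spec hex
          rw [h0] at this
          exact absurd this (by simp [walk])
        · exact h
      set n := Nat.find hex - 1 with hn_def
      have hn1 : walk A B s (n+1) = none := by
        have : n + 1 = Nat.find hex := by omega
        rw [this]
        exact Nat.find_spec hex
      have hnsome : ∀ i, i ≤ n → walk A B s i ≠ none :=
        fun i hi => Nat.find_min hex (by omega)
      set f : ℕ → V := fun i => (walk A B s i).getD s with hf_def
      have hf : ∀ i, i ≤ n → walk A B s i = some (f i) := by
        intro i hi
        obtain ⟨v, hv⟩ := Option.ne_none_iff_exists'.mp (hnsome i hi)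
        rw [hv]
        simp [hf_def, hv]
      have f0 : f 0 = s := by simp [hf_def, show walk A B s 0 = some s from rfl]
      have hw1 : walk A B s 1 = some w0 := by
        rw [walk_succ_eq (show walk A B s 0 = some s from rfl), if_pos (by norm_num)]
        exact partner_eq_some hA hw0
      have hn_pos : 1 ≤ n := by
        by_contra h
        have h0 : n = 0 := by omega
        rw [h0] at hn1
        rw [hn1] at hw1
        cases hw1
      have hstep : ∀ i, i < n → s(f i, f (i+1)) ∈ (if i % 2 = 0 then A else B) :=
        fun i hi => walk_step (hf i (by omega)) (hf (i+1) (by omega))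
      have finj : ∀ i j, i ≤ n → j ≤ n → f i = f j → i = j :=
        fun i j hi hj hij =>
          walk_inj hA hB hndA hndB hsB (hf i hi) (hij ▸ hf j hj)
      have hterm : (if n % 2 = 0 then partner A (f n) else partner B (f n)) = none :=
        (walk_succ_eq (hf n le_rfl)).symm.trans hn1
      -- endpoint facts
      have hendM : n % 2 = 1 → ∀ e ∈ M, f n ∉ e := by
        intro hodd e he hmem
        obtain ⟨w, rfl⟩ := Sym2.mem_iff_exists.mp hmem
        obtain ⟨m, hm⟩ : ∃ m, n = m + 1 := ⟨n - 1, by omega⟩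
        by_cases heM' : s(f n, w) ∈ M'
        · have hst := hstep m (by omega)
          rw [if_pos (by omega)] at hst
          have hne : s(f m, f (m+1)) ≠ s(f n, w) := by
            intro h
            exact (Finset.mem_sdiff.mp hst).2 (h ▸ he)
          refine hM'_disj _ (Finset.mem_sdiff.mp hst).1 _ heM' hne (f n) ?_
              (Sym2.mem_mk_left _ _)
          rw [hm]
          exact Sym2.mem_mk_right _ _
        · have heB : s(f n, w) ∈ B := Finset.mem_sdiff.mpr ⟨he, heM'⟩
          rw [if_neg (by omega)] at hterm
          exact (partner_eq_none_iff.mp hterm w) heB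
      have hendM' : n % 2 = 0 → ∀ e ∈ M', f n ∉ e := by
        intro heven e he hmem
        obtain ⟨w, rfl⟩ := Sym2.mem_iff_exists.mp hmem
        obtain ⟨m, hm⟩ : ∃ m, n = m + 1 := ⟨n - 1, by omega⟩
        by_cases heM : s(f n, w) ∈ M
        · have hst := hstep m (by omega)
          rw [if_neg (by omega)] at hst
          have hne : s(f m, f (m+1)) ≠ s(f n, w) := by
            intro h
            exact (Finset.mem_sdiff.mp hst).2 (h ▸ he)
          refine hM_disj _ (Finset.mem_sdiff.mp hst).1 _ heM hne (f n) ?_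
              (Sym2.mem_mk_left _ _)
          rw [hm]
          exact Sym2.mem_mk_right _ _
        · have heA : s(f n, w) ∈ A := Finset.mem_sdiff.mpr ⟨he, heM⟩
          rw [if_pos (by omega)] at hterm
          exact (partner_eq_none_iff.mp hterm w) heA
      -- any M-edge meeting the walk is a walk B-edge
      have hmeetM : ∀ e ∈ M, ∀ kk, kk ≤ n → f kk ∈ e →
          ∃ i, i < n ∧ i % 2 = 1 ∧ e = s(f i, f (i+1)) := by
        intro e he kk hkk hmem
        by_cases hko : kk % 2 = 1
        · by_cases hkn : kk < n
          · have hst := hstep kk hkn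
            rw [if_neg (by omega)] at hst
            exact ⟨kk, hkn, hko,
              matchUniq' hM_disj he (Finset.mem_sdiff.mp hst).1 hmem (Sym2.mem_mk_left _ _)⟩
          · have hkn' : kk = n := by omega
            exact absurd (hkn' ▸ hmem) (hendM (by omega) e he)
        · rcases Nat.eq_zero_or_pos kk with rfl | hpos
          · exact absurd (f0 ▸ hmem) (hs_unsat e he)
          · obtain ⟨m, rfl⟩ : ∃ m, kk = m + 1 := ⟨kk - 1, by omega⟩
            have hmn : m < n := by omega
            have hst := hstep m hmn
            rw [if_neg (by omega)] at hst
            exact ⟨m, hmn, by omega,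
              matchUniq' hM_disj he (Finset.mem_sdiff.mp hst).1 hmem (Sym2.mem_mk_right _ _)⟩
      have hmeetM' : ∀ e ∈ M', ∀ kk, kk ≤ n → f kk ∈ e →
          ∃ i, i < n ∧ i % 2 = 0 ∧ e = s(f i, f (i+1)) := by
        intro e he kk hkk hmem
        by_cases hko : kk % 2 = 0
        · by_cases hkn : kk < n
          · have hst := hstep kk hkn
            rw [if_pos hko] at hst
            exact ⟨kk, hkn, hko,
              matchUniq' hM'_disj he (Finset.mem_sdiff.mp hst).1 hmem (Sym2.mem_mk_left _ _)⟩
          · have hkn' : kk = n := by omega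
            exact absurd (hkn' ▸ hmem) (hendM' (by omega) e he)
        · obtain ⟨m, rfl⟩ : ∃ m, kk = m + 1 := ⟨kk - 1, by omega⟩
          have hmn : m < n := by omega
          have hst := hstep m hmn
          rw [if_pos (by omega)] at hst
          exact ⟨m, hmn, by omega,
            matchUniq' hM'_disj he (Finset.mem_sdiff.mp hst).1 hmem (Sym2.mem_mk_right _ _)⟩
      -- the walk edge sets and vertex set
      set Mw : Finset (Sym2 V) :=
        ((Finset.range n).filter (fun i => i % 2 = 1)).image (fun i => s(f i, f (i+1)))
        with hMw_def
      set M'w : Finset (Sym2 V) :=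
        ((Finset.range n).filter (fun i => i % 2 = 0)).image (fun i => s(f i, f (i+1)))
        with hM'w_def
      set W : Finset V := (Finset.range (n+1)).image f with hW_def
      have hW : ∀ kk, kk ≤ n → f kk ∈ W :=
        fun kk hkk => Finset.mem_image.mpr ⟨kk, Finset.mem_range.mpr (by omega), rfl⟩
      have hMw_sub : Mw ⊆ M := by
        intro e he
        obtain ⟨i, hi, rfl⟩ := Finset.mem_image.mp he
        have h1 := Finset.mem_filter.mp hi
        have hst := hstep i (Finset.mem_range.mp h1.1)
        rw [if_neg (by omega)] at hst
        exact (Finset.mem_sdiff.mp hst).1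
      have hM'w_sub : M'w ⊆ M' := by
        intro e he
        obtain ⟨i, hi, rfl⟩ := Finset.mem_image.mp he
        have h1 := Finset.mem_filter.mp hi
        have hst := hstep i (Finset.mem_range.mp h1.1)
        rw [if_pos h1.2] at hst
        exact (Finset.mem_sdiff.mp hst).1
      have hedge_inj : ∀ i j, i < n → j < n →
          s(f i, f (i+1)) = s(f j, f (j+1)) → i = j := by
        intro i j hi hj h
        rcases Sym2.eq_iff.mp h with ⟨h1, _⟩ | ⟨h1, h2⟩
        · exact finj i j (by omega) (by omega) h1
        · have e1 := finj i (j+1) (by omega) (by omega) h1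
          have e2 := finj (i+1) j (by omega) (by omega) h2
          omega
      have hMw_card : Mw.card = n / 2 := by
        rw [hMw_def, Finset.card_image_of_injOn, card_filter_odd]
        intro i hi j hj h
        exact hedge_inj i j (Finset.mem_range.mp (Finset.mem_filter.mp hi).1)
          (Finset.mem_range.mp (Finset.mem_filter.mp hj).1) h
      have hM'w_card : M'w.card = (n+1) / 2 := by
        rw [hM'w_def, Finset.card_image_of_injOn, card_filter_even]
        intro i hi j hj h
        exact hedge_inj i j (Finset.mem_range.mp (Finset.mem_filter.mp hi).1)
          (Finset.mem_range.mp (Finset.mem_filter.mp hj).1) h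
      have hMw_W : ∀ e ∈ Mw, ∀ v, v ∈ e → v ∈ W := by
        intro e he v hv
        obtain ⟨i, hi, rfl⟩ := Finset.mem_image.mp he
        have h1 := Finset.mem_range.mp (Finset.mem_filter.mp hi).1
        rcases Sym2.mem_iff.mp hv with h | h
        · exact h ▸ hW i (by omega)
        · exact h ▸ hW (i+1) (by omega)
      have hM'w_W : ∀ e ∈ M'w, ∀ v, v ∈ e → v ∈ W := by
        intro e he v hv
        obtain ⟨i, hi, rfl⟩ := Finset.mem_image.mp he
        have h1 := Finset.mem_range.mp (Finset.mem_filter.mp hi).1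
        rcases Sym2.mem_iff.mp hv with h | h
        · exact h ▸ hW i (by omega)
        · exact h ▸ hW (i+1) (by omega)
      have hM₀ : ∀ e ∈ M \ Mw, ∀ v, v ∈ e → v ∉ W := by
        intro e he v hv hvW
        obtain ⟨kk, hkk, rfl⟩ := Finset.mem_image.mp hvW
        obtain ⟨i, hi, hio, he'⟩ :=
          hmeetM e (Finset.mem_sdiff.mp he).1 kk (by have := Finset.mem_range.mp hkk; omega) hv
        exact (Finset.mem_sdiff.mp he).2 (he' ▸ Finset.mem_image.mpr
          ⟨i, Finset.mem_filter.mpr ⟨Finset.mem_range.mpr hi, hio⟩, rfl⟩)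
      have hM'₀ : ∀ e ∈ M' \ M'w, ∀ v, v ∈ e → v ∉ W := by
        intro e he v hv hvW
        obtain ⟨kk, hkk, rfl⟩ := Finset.mem_image.mp hvW
        obtain ⟨i, hi, hio, he'⟩ :=
          hmeetM' e (Finset.mem_sdiff.mp he).1 kk (by have := Finset.mem_range.mp hkk; omega) hv
        exact (Finset.mem_sdiff.mp he).2 (he' ▸ Finset.mem_image.mpr
          ⟨i, Finset.mem_filter.mpr ⟨Finset.mem_range.mpr hi, hio⟩, rfl⟩)
      -- the reduced graph
      set G' : SimpleGraph V :=
        { Adj := fun u v => G.Adj u v ∧ u ∉ W ∧ v ∉ W,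
          symm := ⟨fun u v h => ⟨h.1.symm, h.2.2, h.2.1⟩⟩,
          loopless := ⟨fun v h => G.loopless.irrefl v h.1⟩ } with hG'_def
      have hM₀_edges : ∀ e ∈ M \ Mw, e ∈ G'.edgeSet := by
        intro e
        induction e using Sym2.ind with
        | _ u v =>
          intro he
          have h1 : G.Adj u v :=
            (SimpleGraph.mem_edgeSet G).mp (hM_edges _ (Finset.mem_sdiff.mp he).1)
          exact (SimpleGraph.mem_edgeSet G').mpr
            ⟨h1, hM₀ _ he u (Sym2.mem_mk_left _ _), hM₀ _ he v (Sym2.mem_mk_right _ _)⟩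
      have hM'₀_edges : ∀ e ∈ M' \ M'w, e ∈ G'.edgeSet := by
        intro e
        induction e using Sym2.ind with
        | _ u v =>
          intro he
          have h1 : G.Adj u v :=
            (SimpleGraph.mem_edgeSet G).mp (hM'_edges _ (Finset.mem_sdiff.mp he).1)
          exact (SimpleGraph.mem_edgeSet G').mpr
            ⟨h1, hM'₀ _ he u (Sym2.mem_mk_left _ _), hM'₀ _ he v (Sym2.mem_mk_right _ _)⟩
      have hM₀_disj : ∀ e ∈ M \ Mw, ∀ f ∈ M \ Mw, e ≠ f → ∀ v : V, v ∈ e → v ∉ f :=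
        fun e he f hf => hM_disj e (Finset.mem_sdiff.mp he).1 f (Finset.mem_sdiff.mp hf).1
      have hM'₀_disj : ∀ e ∈ M' \ M'w, ∀ f ∈ M' \ M'w, e ≠ f → ∀ v : V, v ∈ e → v ∉ f :=
        fun e he f hf => hM'_disj e (Finset.mem_sdiff.mp he).1 f (Finset.mem_sdiff.mp hf).1
      have haug₀ : ∀ (n' : ℕ) (g : ℕ → V), n' % 2 = 1 →
          (∀ i j, i ≤ n' → j ≤ n' → g i = g j → i = j) →
          (∀ i, i < n' → G'.Adj (g i) (g (i + 1))) →
          (∀ e ∈ M \ Mw, g 0 ∉ e) → (∀ e ∈ M \ Mw, g n' ∉ e) →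
          (∀ i, i < n' → (s(g i, g (i + 1)) ∈ M \ Mw ↔ i % 2 = 1)) →
          2 * L + 1 < n' := by
        intro n' g hodd' hinj' hadj' h0' hn' halt'
        have hn'pos : 1 ≤ n' := by omega
        have notW : ∀ i, i ≤ n' → g i ∉ W := by
          intro i hi
          rcases lt_or_eq_of_le hi with h | h
          · exact (hadj' i h).2.1
          · subst h
            obtain ⟨m', hm'⟩ : ∃ m', i = m' + 1 := ⟨i - 1, by omega⟩
            rw [hm']
            exact (hadj' m' (by omega)).2.2
        refine haug n' g hodd' hinj' (fun i hi => (hadj' i hi).1) ?_ ?_ ?_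
        · intro e he hmem
          by_cases heMw : e ∈ Mw
          · exact notW 0 (by omega) (hMw_W e heMw _ hmem)
          · exact h0' e (Finset.mem_sdiff.mpr ⟨he, heMw⟩) hmem
        · intro e he hmem
          by_cases heMw : e ∈ Mw
          · exact notW n' le_rfl (hMw_W e heMw _ hmem)
          · exact hn' e (Finset.mem_sdiff.mpr ⟨he, heMw⟩) hmem
        · intro i hi
          rw [← halt' i hi]
          constructor
          · intro hmem
            by_cases heMw : s(g i, g (i+1)) ∈ Mw
            · exact absurd (hMw_W _ heMw _ (Sym2.mem_mk_left _ _)) (notW i (by omega))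
            · exact Finset.mem_sdiff.mpr ⟨hmem, heMw⟩
          · exact fun h => (Finset.mem_sdiff.mp h).1
      -- recursive call
      have hM'_split : (M' \ M'w).card + M'w.card = M'.card :=
        Finset.card_sdiff_add_card_eq_card hM'w_sub
      have hM_split : (M \ Mw).card + Mw.card = M.card :=
        Finset.card_sdiff_add_card_eq_card hMw_sub
      have hM'w_pos : 1 ≤ M'w.card := by rw [hM'w_card]; omega
      have hcard' : (M' \ M'w).card ≤ k := by omega
      have hrec := ih G' (M \ Mw) (M' \ M'w) hcard' hM₀_edges hM₀_disj haug₀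
        hM'₀_edges hM'₀_disj
      -- the per-walk inequality
      have hkey : (L+1) * M'w.card ≤ (L+2) * Mw.card := by
        rw [hM'w_card, hMw_card]
        by_cases hno : n % 2 = 1
        · have hbig : 2*L + 1 < n := by
            refine haug n f hno finj (fun i hi => ?_)
              (fun e he hc => hs_unsat e he (f0 ▸ hc)) (hendM hno) (fun i hi => ?_)
            · have hst := hstep i hi
              by_cases hie : i % 2 = 0
              · rw [if_pos hie] at hst
                exact (SimpleGraph.mem_edgeSet G).mp (hM'_edges _ (Finset.mem_sdiff.mp hst).1)
              · rw [if_neg hie] at hst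
                exact (SimpleGraph.mem_edgeSet G).mp (hM_edges _ (Finset.mem_sdiff.mp hst).1)
            · constructor
              · intro hmem
                by_contra hieven
                have hst := hstep i hi
                rw [if_pos (by omega)] at hst
                exact (Finset.mem_sdiff.mp hst).2 hmem
              · intro hio
                have hst := hstep i hi
                rw [if_neg (by omega)] at hst
                exact (Finset.mem_sdiff.mp hst).1
          have ha1 : (n+1)/2 = n/2 + 1 := by omega
          have hL : L + 1 ≤ n/2 := by omega
          rw [ha1]
          nlinarith
        · have heq : (n+1)/2 = n/2 := by omega
          rw [heq]
          exact Nat.mul_le_mul_right _ (by omega)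
      calc (L+1) * M'.card = (L+1) * (M' \ M'w).card + (L+1) * M'w.card := by
            rw [← hM'_split]; ring
        _ ≤ (L+2) * (M \ Mw).card + (L+2) * Mw.card := Nat.add_le_add hrec hkey
        _ = (L+2) * M.card := by rw [← hM_split]; ring
    · -- base case: every vertex covered by M'\M is covered by M\M'
      push_neg at hS
      have hcover : ∀ v : V, (∃ e ∈ A, v ∈ e) → ∃ e ∈ B, v ∈ e := by
        rintro v ⟨e, heA, hv⟩
        obtain ⟨w, rfl⟩ := Sym2.mem_iff_exists.mp hv
        by_cases hvM : ∃ e' ∈ M, v ∈ e'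
        · obtain ⟨e', he', hv'⟩ := hvM
          refine ⟨e', Finset.mem_sdiff.mpr ⟨he', ?_⟩, hv'⟩
          intro he'M'
          have hne : s(v,w) ≠ e' := fun h => (Finset.mem_sdiff.mp heA).2 (h ▸ he')
          exact hM'_disj _ (Finset.mem_sdiff.mp heA).1 _ he'M' hne v
            (Sym2.mem_mk_left _ _) hv'
        · push_neg at hvM
          exact absurd heA (hS v hvM w)
      have h1 : 2 * A.card ≤ 2 * B.card := by
        rw [← cov_card A hndA hA, ← cov_card B hndB hB]
        apply Finset.card_le_card
        intro v hv
        simp only [Finset.mem_biUnion, Finset.mem_filter] at hv ⊢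
        obtain ⟨e, he, _, hve⟩ := hv
        obtain ⟨e', he', hve'⟩ := hcover v ⟨e, he, hve⟩
        exact ⟨e', he', Finset.mem_univ _, hve'⟩
      have h2 : M'.card ≤ M.card := by
        have e1 := Finset.card_inter_add_card_sdiff M' M
        have e2 := Finset.card_inter_add_card_sdiff M M'
        have e3 : (M' ∩ M).card = (M ∩ M').card := by rw [Finset.inter_comm]
        have h1' : 2 * (M' \ M).card ≤ 2 * (M \ M').card := h1
        omega
      calc (L+1) * M'.card ≤ (L+1) * M.card := Nat.mul_le_mul_left _ h2
        _ ≤ (L+2) * M.card := Nat.mul_le_mul_right _ (by omega)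

end MatchRatio

/-- If every `M`-augmenting path of the graph `G` has more than `2L + 1` edges, then
every matching `M'` satisfies `(L + 1) |M'| ≤ (L + 2) |M|`.  An `M`-augmenting path
with `n` edges is encoded by its sequence of (distinct) vertices `f 0, …, f n`:
`n` is odd, consecutive vertices are adjacent, the two endpoints are unsaturated
by `M`, and the edges alternate out of / in `M`. -/
theorem matching_ratio_of_no_short_augmenting_path {V : Type*} [Fintype V]
    (G : SimpleGraph V) (M : Finset (Sym2 V)) (L : ℕ)
    (hM_edges : ∀ e ∈ M, e ∈ G.edgeSet)
    (hM_disj : ∀ e ∈ M, ∀ f ∈ M, e ≠ f → ∀ v : V, v ∈ e → v ∉ f)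
    (haug : ∀ (n : ℕ) (f : ℕ → V),
      n % 2 = 1 →
      (∀ i j, i ≤ n → j ≤ n → f i = f j → i = j) →
      (∀ i, i < n → G.Adj (f i) (f (i + 1))) →
      (∀ e ∈ M, f 0 ∉ e) → (∀ e ∈ M, f n ∉ e) →
      (∀ i, i < n → (s(f i, f (i + 1)) ∈ M ↔ i % 2 = 1)) →
      2 * L + 1 < n)
    (M' : Finset (Sym2 V))
    (hM'_edges : ∀ e ∈ M', e ∈ G.edgeSet)
    (hM'_disj : ∀ e ∈ M', ∀ f ∈ M', e ≠ f → ∀ v : V, v ∈ e → v ∉ f) :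
    (L + 1) * M'.card ≤ (L + 2) * M.card := by
  exact MatchRatio.aux L M'.card G M M' le_rfl hM_edges hM_disj haug hM'_edges hM'_disj
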